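/- Let G be a finite strongly connected directed graph and P, P' two probability distributions on environments (each environment an irreducible stochastic kernel supported on E). If for every vertex o and every finite path γ from o the annealed path probabilities agree, i.e., E_P[p(γ)] = E_{P'}[p(γ)], then P = P'. (The annealed law of the walk determines the law of the environment, since the environment can be recovered almost surely as the limit of empirical transition frequencies n_e(X_0,…,X_n)/n_{tail(e)}(X_0,…,X_n) as n → ∞.) -/

import Mathlib

open MeasureTheory ProbabilityTheory Filter

/-- Probability of following a finite path: product of transition probabilities. -/
def pathProb {V : Type*} (p : V → V → ℝ) : List V → ℝ
  | x :: y :: rest => p x y * pathProb p (y :: rest)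
  | _ => 1

/-- A list of vertices is a path in the edge set `E`. -/
def IsPathIn {V : Type*} (E : Finset (V × V)) : List V → Prop
  | x :: y :: rest => (x, y) ∈ E ∧ IsPathIn E (y :: rest)
  | _ => True

/-- `G = (V, E)` is strongly connected. -/
def StronglyConnected {V : Type*} (E : Finset (V × V)) : Prop :=
  ∀ x y : V, ∃ γ : List V, IsPathIn E γ ∧ γ.head? = some x ∧ γ.getLast? = some y

open scoped Classical in
/-- The Dirichlet distribution with parameters `w` (on the coordinates where `w ≠ 0`),
realized as normalized independent Gamma random variables. -/
noncomputable def siteDirichlet {ι : Type*} [Fintype ι] (w : ι → ℝ) : Measure (ι → ℝ) :=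
  (Measure.pi fun i : {i : ι // w i ≠ 0} => gammaMeasure (w i) 1).map
    fun g i => if h : w i ≠ 0 then g ⟨i, h⟩ / ∑ j, g j else 0

/-- Dirichlet distribution on environments: independent Dirichlet exit probabilities
at each vertex, with parameters `α x ·` at vertex `x`. -/
noncomputable def envDirichlet {V : Type*} [Fintype V] (α : V → V → ℝ) :
    Measure (V → V → ℝ) :=
  Measure.pi fun x => siteDirichlet (α x)

/-- The edge weights `α` are adapted to the edge set `E`:
positive on edges, zero off edges. -/
def AdaptedWeights {V : Type*} (E : Finset (V × V)) (α : V → V → ℝ) : Prop :=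
  ∀ x y, ((x, y) ∈ E → 0 < α x y) ∧ ((x, y) ∉ E → α x y = 0)

/-- ascending factorial `a (a+1) ⋯ (a+n-1)`. -/
noncomputable def ascFactorial (a : ℝ) (n : ℕ) : ℝ := ∏ j ∈ Finset.range n, (a + j)

/-- A valid environment on the graph `(V, E)`: nonnegative transition probabilities,
supported exactly on `E`, rows summing to `1`. -/
def ValidEnv {V : Type*} [Fintype V] (E : Finset (V × V)) (p : V → V → ℝ) : Prop :=
  (∀ x y, 0 < p x y ↔ (x, y) ∈ E) ∧ (∀ x y, (x, y) ∉ E → p x y = 0) ∧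
    (∀ x, ∑ y, p x y = 1)

section Stmt6Aux
set_option linter.unusedSectionVars false

namespace Stmt6
variable {V : Type*} {E : Finset (V × V)} {p : V → V → ℝ}

@[simp] lemma pathProb_nil (p : V → V → ℝ) : pathProb p ([] : List V) = 1 := rfl
@[simp] lemma pathProb_single (p : V → V → ℝ) (x : V) : pathProb p ([x] : List V) = 1 := rfl
@[simp] lemma pathProb_cons_cons (p : V → V → ℝ) (x y : V) (l : List V) :
    pathProb p (x :: y :: l) = p x y * pathProb p (y :: l) := rfl

@[simp] lemma isPathIn_nil : IsPathIn E ([] : List V) := trivial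
@[simp] lemma isPathIn_single (x : V) : IsPathIn E ([x] : List V) := trivial
@[simp] lemma isPathIn_cons_cons (x y : V) (l : List V) :
    IsPathIn E (x :: y :: l) ↔ (x, y) ∈ E ∧ IsPathIn E (y :: l) := Iff.rfl

lemma exists_cons_of_head? {l : List V} {x : V} (h : l.head? = some x) :
    ∃ r, l = x :: r := by
  cases l with
  | nil => simp at h
  | cons a r => exact ⟨r, by simp_all⟩

private lemma pathProb_append_cons (p : V → V → ℝ) {x : V} (r : List V) :
    ∀ (t : List V) (a : V), (a :: t).getLast? = some x →
      pathProb p ((a :: t) ++ r) = pathProb p (a :: t) * pathProb p (x :: r) := by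
  intro t
  induction t with
  | nil =>
    intro a ha
    have : a = x := by simpa using ha
    subst this
    cases r <;> simp
  | cons b t ih =>
    intro a ha
    have hb : (b :: t).getLast? = some x := by
      simpa [List.getLast?_cons_cons] using ha
    have := ih b hb
    calc pathProb p ((a :: b :: t) ++ r)
        = p a b * pathProb p ((b :: t) ++ r) := rfl
      _ = p a b * (pathProb p (b :: t) * pathProb p (x :: r)) := by rw [this]
      _ = pathProb p (a :: b :: t) * pathProb p (x :: r) := by
          rw [pathProb_cons_cons, mul_assoc]

private lemma isPathIn_append_cons {x : V} {r : List V} (hr : IsPathIn E (x :: r)) :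
    ∀ (t : List V) (a : V), (a :: t).getLast? = some x → IsPathIn E (a :: t) →
      IsPathIn E ((a :: t) ++ r) := by
  intro t
  induction t with
  | nil =>
    intro a ha _
    have : a = x := by simpa using ha
    subst this; simpa using hr
  | cons b t ih =>
    intro a ha hpath
    have hb : (b :: t).getLast? = some x := by
      simpa [List.getLast?_cons_cons] using ha
    exact ⟨hpath.1, ih b hb hpath.2⟩

/-- gluing two lists that share an endpoint -/
def glue (l₁ l₂ : List V) : List V := l₁ ++ l₂.tail

lemma pathProb_glue (p : V → V → ℝ) {l₁ l₂ : List V} {x : V}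
    (h₁ : l₁.getLast? = some x) (h₂ : l₂.head? = some x) :
    pathProb p (glue l₁ l₂) = pathProb p l₁ * pathProb p l₂ := by
  obtain ⟨r, rfl⟩ := exists_cons_of_head? h₂
  cases l₁ with
  | nil => simp at h₁
  | cons a t => exact pathProb_append_cons p r t a h₁

lemma isPathIn_glue {l₁ l₂ : List V} {x : V}
    (h₁ : l₁.getLast? = some x) (h₂ : l₂.head? = some x)
    (hp₁ : IsPathIn E l₁) (hp₂ : IsPathIn E l₂) : IsPathIn E (glue l₁ l₂) := by
  obtain ⟨r, rfl⟩ := exists_cons_of_head? h₂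
  cases l₁ with
  | nil => simp at h₁
  | cons a t => exact isPathIn_append_cons hp₂ t a h₁ hp₁

lemma head?_glue {l₁ l₂ : List V} {x : V} (h₁ : l₁.getLast? = some x) :
    (glue l₁ l₂).head? = l₁.head? := by
  cases l₁ with
  | nil => simp at h₁
  | cons a t => simp [glue]

lemma getLast?_glue {l₁ l₂ : List V} {x : V}
    (h₁ : l₁.getLast? = some x) (h₂ : l₂.head? = some x) :
    (glue l₁ l₂).getLast? = l₂.getLast? := by
  obtain ⟨r, rfl⟩ := exists_cons_of_head? h₂
  unfold glue
  cases r with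
  | nil => simpa using h₁
  | cons b r' =>
    rw [List.tail_cons, List.getLast?_append_cons, List.getLast?_cons_cons]

end Stmt6

namespace Stmt6
variable {V : Type*} {E : Finset (V × V)} {p : V → V → ℝ}

/-- a loop at `o` -/
def IsLoop (E : Finset (V × V)) (o : V) (γ : List V) : Prop :=
  IsPathIn E γ ∧ γ.head? = some o ∧ γ.getLast? = some o

lemma isLoop_trivial (o : V) : IsLoop E o ([o] : List V) := ⟨trivial, rfl, rfl⟩

lemma isLoop_glue {o : V} {γ₁ γ₂ : List V} (h₁ : IsLoop E o γ₁) (h₂ : IsLoop E o γ₂) :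
    IsLoop E o (glue γ₁ γ₂) :=
  ⟨isPathIn_glue h₁.2.2 h₂.2.1 h₁.1 h₂.1,
   by rw [head?_glue h₁.2.2]; exact h₁.2.1,
   by rw [getLast?_glue h₁.2.2 h₂.2.1]; exact h₂.2.2⟩

lemma pathProb_glue_loop {o : V} {γ₁ γ₂ : List V} (h₁ : IsLoop E o γ₁) (h₂ : IsLoop E o γ₂)
    (p : V → V → ℝ) : pathProb p (glue γ₁ γ₂) = pathProb p γ₁ * pathProb p γ₂ :=
  pathProb_glue p h₁.2.2 h₂.2.1

/-- glue a list of loops at `o` into one loop -/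
def glueList (o : V) : List (List V) → List V
  | [] => [o]
  | γ :: L => glue γ (glueList o L)

lemma isLoop_glueList (o : V) (L : List (List V)) (hL : ∀ γ ∈ L, IsLoop E o γ) :
    IsLoop E o (glueList o L) := by
  induction L with
  | nil => exact isLoop_trivial o
  | cons γ L ih =>
    exact isLoop_glue (hL γ (by simp)) (ih fun γ' h => hL γ' (by simp [h]))

lemma pathProb_glueList (o : V) (p : V → V → ℝ) (L : List (List V))
    (hL : ∀ γ ∈ L, IsLoop E o γ) :
    pathProb p (glueList o L) = (L.map (pathProb p)).prod := by
  induction L with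
  | nil => simp [glueList]
  | cons γ L ih =>
    have h₁ := hL γ (by simp)
    have h₂ : ∀ γ' ∈ L, IsLoop E o γ' := fun γ' h => hL γ' (by simp [h])
    rw [glueList, pathProb_glue_loop h₁ (isLoop_glueList o L h₂) p, ih h₂]
    simp

section Valid
variable [Fintype V]

lemma validEnv_nonneg (hp : ValidEnv E p) (x y : V) : 0 ≤ p x y := by
  by_cases h : (x, y) ∈ E
  · exact ((hp.1 x y).2 h).le
  · exact (hp.2.1 x y h).ge

lemma validEnv_le_one (hp : ValidEnv E p) (x y : V) : p x y ≤ 1 := by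
  calc p x y ≤ ∑ z, p x z :=
        Finset.single_le_sum (fun z _ => validEnv_nonneg hp x z) (Finset.mem_univ y)
    _ = 1 := hp.2.2 x

lemma pathProb_pos (hp : ValidEnv E p) : ∀ {γ : List V}, IsPathIn E γ → 0 < pathProb p γ := by
  intro γ
  induction γ with
  | nil => intro _; simp
  | cons a t ih =>
    cases t with
    | nil => intro _; simp
    | cons b t' =>
      intro hγ
      exact mul_pos ((hp.1 a b).2 hγ.1) (ih hγ.2)

lemma pathProb_le_one (hp : ValidEnv E p) : ∀ {γ : List V}, IsPathIn E γ →
    pathProb p γ ≤ 1 := by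
  intro γ
  induction γ with
  | nil => intro _; simp
  | cons a t ih =>
    cases t with
    | nil => intro _; simp
    | cons b t' =>
      intro hγ
      have h1 := validEnv_le_one hp a b
      have h2 := ih hγ.2
      have h3 := (pathProb_pos hp hγ.2).le
      calc p a b * pathProb p (b :: t') ≤ 1 * 1 := by
            apply mul_le_mul h1 h2 h3 zero_le_one
        _ = 1 := by ring

lemma pathProb_mem_Icc (hp : ValidEnv E p) {γ : List V} (hγ : IsPathIn E γ) :
    pathProb p γ ∈ Set.Icc (0:ℝ) 1 :=
  ⟨(pathProb_pos hp hγ).le, pathProb_le_one hp hγ⟩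

end Valid
end Stmt6

namespace Stmt6
variable {V : Type*} {E : Finset (V × V)}

section Gauge
variable [Fintype V] [Nonempty V]

lemma gauge (hconn : StronglyConnected E) {p p' : V → V → ℝ}
    (hp : ValidEnv E p) (hp' : ValidEnv E p')
    (a b a' b' : V → ℝ)
    (ha : ∀ x, 0 < a x) (ha' : ∀ x, 0 < a' x) (hb' : ∀ x, 0 < b' x)
    (h1 : ∀ x, a x * b x = a' x * b' x)
    (h2 : ∀ x y, (x, y) ∈ E → a x * (p x y * b y) = a' x * (p' x y * b' y)) :
    p = p' := by
  classical
  set t : V → ℝ := fun x => a' x / a x with ht_def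
  have ht : ∀ x, 0 < t x := fun x => div_pos (ha' x) (ha x)
  have key : ∀ x y, p' x y * t x = p x y * t y := by
    intro x y
    by_cases hE : (x, y) ∈ E
    · have e2 := h2 x y hE
      have e1y := h1 y
      have hG : p' x y * a' x * a y * b' y = p x y * a' y * a x * b' y := by
        linear_combination (- a y) * e2 + (p x y * a x) * e1y
      have hG' : p' x y * a' x * a y = p x y * a' y * a x :=
        mul_right_cancel₀ (hb' y).ne' hG
      have hax : a x ≠ 0 := (ha x).ne'
      have hay : a y ≠ 0 := (ha y).ne'
      simp only [ht_def]
      field_simp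
      linear_combination hG'
    · simp [hp.2.1 x y hE, hp'.2.1 x y hE]
  have harmonic : ∀ x, ∑ y, p x y * t y = t x := by
    intro x
    calc ∑ y, p x y * t y = ∑ y, p' x y * t x :=
          Finset.sum_congr rfl fun y _ => (key x y).symm
      _ = (∑ y, p' x y) * t x := (Finset.sum_mul _ _ _).symm
      _ = t x := by rw [hp'.2.2 x, one_mul]
  obtain ⟨x₀, -, hx₀⟩ :=
    Finset.exists_max_image Finset.univ t ⟨Classical.arbitrary V, Finset.mem_univ _⟩
  have step : ∀ u v, t u = t x₀ → (u, v) ∈ E → t v = t x₀ := by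
    intro u v hu huv
    have hsum : ∑ y, p u y * (t x₀ - t y) = 0 := by
      have expand : ∑ y, p u y * (t x₀ - t y)
          = (∑ y, p u y) * t x₀ - ∑ y, p u y * t y := by
        rw [Finset.sum_mul, ← Finset.sum_sub_distrib]
        exact Finset.sum_congr rfl fun y _ => by ring
      rw [expand, hp.2.2 u, harmonic u, hu]; ring
    have hterm := (Finset.sum_eq_zero_iff_of_nonneg
      (fun y _ => mul_nonneg (validEnv_nonneg hp u y)
        (sub_nonneg.2 (hx₀ y (Finset.mem_univ y))))).1 hsum v (Finset.mem_univ v)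
    have hpv : (0:ℝ) < p u v := (hp.1 u v).2 huv
    rcases mul_eq_zero.1 hterm with h | h
    · exact absurd h hpv.ne'
    · linarith [sub_eq_zero.1 h]
  have walk : ∀ γ : List V, IsPathIn E γ → ∀ u, γ.head? = some u → t u = t x₀ →
      ∀ z, γ.getLast? = some z → t z = t x₀ := by
    intro γ
    induction γ with
    | nil => intro _ u hu; simp at hu
    | cons c r ih =>
      intro hγ u hu htu z hz
      have hc : c = u := by simpa using hu
      subst hc
      cases r with
      | nil =>
        have : c = z := by simpa using hz
        subst this; exact htu
      | cons d r' =>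
        have hd : t d = t x₀ := step c d htu hγ.1
        exact ih hγ.2 d rfl hd z (by simpa [List.getLast?_cons_cons] using hz)
  have allM : ∀ z, t z = t x₀ := by
    intro z
    obtain ⟨γ, hγ, hh, hl⟩ := hconn x₀ z
    exact walk γ hγ x₀ hh rfl z hl
  funext x y
  by_cases hE : (x, y) ∈ E
  · have k := key x y
    rw [allM x, allM y] at k
    exact (mul_right_cancel₀ (ht x₀).ne' k).symm
  · rw [hp.2.1 x y hE, hp'.2.1 x y hE]

end Gauge
end Stmt6

namespace Stmt6
variable {V : Type*} {E : Finset (V × V)}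

lemma continuous_pathProb : ∀ γ : List V, Continuous fun q : V → V → ℝ => pathProb q γ := by
  intro γ
  induction γ with
  | nil => simpa using continuous_const
  | cons a t ih =>
    cases t with
    | nil => simpa using continuous_const
    | cons b t' =>
      simp only [pathProb_cons_cons]
      exact Continuous.mul (by fun_prop) ih

section Loops
variable (hconn : StronglyConnected E)

noncomputable def pathTo (x y : V) : List V := (hconn x y).choose

lemma pathTo_path (x y : V) : IsPathIn E (pathTo hconn x y) := (hconn x y).choose_spec.1
lemma pathTo_head (x y : V) : (pathTo hconn x y).head? = some x := (hconn x y).choose_spec.2.1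
lemma pathTo_last (x y : V) : (pathTo hconn x y).getLast? = some y := (hconn x y).choose_spec.2.2

open Classical in
noncomputable def loopOf (o : V) : V ⊕ (V × V) → List V
  | .inl x => glue (pathTo hconn o x) (pathTo hconn x o)
  | .inr (x, y) =>
      if (x, y) ∈ E then
        glue (glue (pathTo hconn o x) ([x, y] : List V)) (pathTo hconn y o)
      else [o]

lemma isLoop_loopOf (o : V) (i : V ⊕ (V × V)) : IsLoop E o (loopOf hconn o i) := by
  classical
  rcases i with x | ⟨x, y⟩
  · rw [loopOf]
    exact ⟨isPathIn_glue (pathTo_last hconn o x) (pathTo_head hconn x o)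
        (pathTo_path hconn o x) (pathTo_path hconn x o),
      by rw [head?_glue (pathTo_last hconn o x)]; exact pathTo_head hconn o x,
      by rw [getLast?_glue (pathTo_last hconn o x) (pathTo_head hconn x o)]
         exact pathTo_last hconn x o⟩
  · rw [loopOf]
    by_cases hE : (x, y) ∈ E
    · rw [if_pos hE]
      have hmid : IsPathIn E ([x, y] : List V) := ⟨hE, trivial⟩
      have hhead : (([x, y] : List V)).head? = some x := rfl
      have hlastxy : (([x, y] : List V)).getLast? = some y := rfl
      have h₁ : IsPathIn E (glue (pathTo hconn o x) ([x, y] : List V)) :=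
        isPathIn_glue (pathTo_last hconn o x) hhead (pathTo_path hconn o x) hmid
      have h₁h : (glue (pathTo hconn o x) ([x, y] : List V)).head? = some o := by
        rw [head?_glue (pathTo_last hconn o x)]; exact pathTo_head hconn o x
      have h₁l : (glue (pathTo hconn o x) ([x, y] : List V)).getLast? = some y := by
        rw [getLast?_glue (pathTo_last hconn o x) hhead]; rfl
      exact ⟨isPathIn_glue h₁l (pathTo_head hconn y o) h₁ (pathTo_path hconn y o),
        by rw [head?_glue h₁l]; exact h₁h,
        by rw [getLast?_glue h₁l (pathTo_head hconn y o)]; exact pathTo_last hconn y o⟩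
    · rw [if_neg hE]; exact isLoop_trivial o

lemma pathProb_loopOf_inl (o x : V) (q : V → V → ℝ) :
    pathProb q (loopOf hconn o (Sum.inl x)) =
      pathProb q (pathTo hconn o x) * pathProb q (pathTo hconn x o) := by
  rw [loopOf]
  exact pathProb_glue q (pathTo_last hconn o x) (pathTo_head hconn x o)

lemma pathProb_loopOf_inr (o x y : V) (hE : (x, y) ∈ E) (q : V → V → ℝ) :
    pathProb q (loopOf hconn o (Sum.inr (x, y))) =
      pathProb q (pathTo hconn o x) * (q x y * pathProb q (pathTo hconn y o)) := by
  classical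
  rw [loopOf, if_pos hE]
  have hhead : (([x, y] : List V)).head? = some x := rfl
  have h₁l : (glue (pathTo hconn o x) ([x, y] : List V)).getLast? = some y := by
    rw [getLast?_glue (pathTo_last hconn o x) hhead]; rfl
  rw [pathProb_glue q h₁l (pathTo_head hconn y o),
    pathProb_glue q (pathTo_last hconn o x) hhead]
  simp [mul_assoc]

/-- loop values determine a valid environment -/
lemma injOn_valid [Fintype V] [Nonempty V] (o : V) {p p' : V → V → ℝ}
    (hp : ValidEnv E p) (hp' : ValidEnv E p')
    (hv : ∀ i, pathProb p (loopOf hconn o i) = pathProb p' (loopOf hconn o i)) :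
    p = p' := by
  apply gauge hconn hp hp'
    (fun x => pathProb p (pathTo hconn o x)) (fun x => pathProb p (pathTo hconn x o))
    (fun x => pathProb p' (pathTo hconn o x)) (fun x => pathProb p' (pathTo hconn x o))
  · exact fun x => pathProb_pos hp (pathTo_path hconn o x)
  · exact fun x => pathProb_pos hp' (pathTo_path hconn o x)
  · exact fun x => pathProb_pos hp' (pathTo_path hconn x o)
  · intro x
    have := hv (Sum.inl x)
    rwa [pathProb_loopOf_inl, pathProb_loopOf_inl] at this
  · intro x y hE
    have := hv (Sum.inr (x, y))
    rw [pathProb_loopOf_inr hconn o x y hE, pathProb_loopOf_inr hconn o x y hE] at this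
    linear_combination this

end Loops
end Stmt6

namespace Stmt6
section Main
variable {V : Type*} [Fintype V]

lemma measurable_eval (x y : V) : Measurable fun q : V → V → ℝ => q x y :=
  (measurable_pi_apply y).comp (measurable_pi_apply x)

lemma measurableSet_validEnv (E : Finset (V × V)) :
    MeasurableSet {q : V → V → ℝ | ValidEnv E q} := by
  classical
  have hev : ∀ x y : V, Measurable fun q : V → V → ℝ => q x y := measurable_eval
  have hrw : {q : V → V → ℝ | ValidEnv E q} =
      ((⋂ x, ⋂ y, (if (x, y) ∈ E then {q : V → V → ℝ | 0 < q x y}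
        else {q : V → V → ℝ | q x y = 0})) ∩ ⋂ x, {q : V → V → ℝ | ∑ y, q x y = 1}) := by
    ext q
    simp only [Set.mem_inter_iff, Set.mem_iInter, Set.mem_setOf_eq]
    constructor
    · intro hq
      refine ⟨fun x y => ?_, fun x => hq.2.2 x⟩
      by_cases hE : (x, y) ∈ E
      · simp only [if_pos hE, Set.mem_setOf_eq]; exact (hq.1 x y).2 hE
      · simp only [if_neg hE, Set.mem_setOf_eq]; exact hq.2.1 x y hE
    · rintro ⟨h₁, h₂⟩
      refine ⟨fun x y => ⟨fun h0 => ?_, fun hE => ?_⟩, fun x y hE => ?_, h₂⟩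
      · by_contra hE
        have := h₁ x y; rw [if_neg hE] at this
        rw [Set.mem_setOf_eq] at this; rw [this] at h0; exact lt_irrefl 0 h0
      · have := h₁ x y; rwa [if_pos hE] at this
      · have := h₁ x y; rwa [if_neg hE] at this
  rw [hrw]
  refine MeasurableSet.inter ?_ ?_
  · refine MeasurableSet.iInter fun x => MeasurableSet.iInter fun y => ?_
    by_cases hE : (x, y) ∈ E
    · rw [if_pos hE]; exact measurableSet_lt measurable_const (hev x y)
    · rw [if_neg hE]; exact (hev x y) (measurableSet_singleton 0)
  · refine MeasurableSet.iInter fun x => ?_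
    exact (Finset.measurable_sum Finset.univ fun y _ => hev x y) (measurableSet_singleton 1)

end Main
end Stmt6


end Stmt6Aux

/-- the annealed path probabilities determine the law of the environment. -/
theorem stmt_6 {V : Type*} [Fintype V]
    (E : Finset (V × V)) (hconn : StronglyConnected E)
    (P P' : Measure (V → V → ℝ))
    (hP : IsProbabilityMeasure P) (hP' : IsProbabilityMeasure P')
    (hPsupp : ∀ᵐ p ∂P, ValidEnv E p) (hP'supp : ∀ᵐ p ∂P', ValidEnv E p)
    (h : ∀ γ : List V, IsPathIn E γ →
      ∫ p, pathProb p γ ∂P = ∫ p, pathProb p γ ∂P') :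
    P = P' := by
  classical
  open Stmt6 in
  rcases isEmpty_or_nonempty V with hV | hV
  · have hss : ∀ s : Set (V → V → ℝ), s = ∅ ∨ s = Set.univ := by
      intro s
      rcases s.eq_empty_or_nonempty with hs | ⟨q, hq⟩
      · exact Or.inl hs
      · refine Or.inr (Set.eq_univ_of_forall fun r => ?_)
        have : r = q := funext fun x => (hV.elim x)
        rwa [this]
    ext s hs
    rcases hss s with rfl | rfl
    · simp
    · rw [measure_univ, measure_univ]
  · set o := Classical.arbitrary V with ho
    set S : Set (V → V → ℝ) := {q | ValidEnv E q} with hS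
    have hSm : MeasurableSet S := Stmt6.measurableSet_validEnv E
    set c : V ⊕ (V × V) → List V := Stmt6.loopOf hconn o with hc
    set Φ : (V → V → ℝ) → (V ⊕ (V × V)) → ℝ := fun q i => pathProb q (c i) with hΦ
    set X : Set ((V ⊕ (V × V)) → ℝ) := Set.univ.pi fun _ => Set.Icc (0:ℝ) 1 with hX
    have hXc : IsCompact X := isCompact_univ_pi fun _ => isCompact_Icc
    haveI : CompactSpace X := isCompact_iff_compactSpace.1 hXc
    have hclamp_mem : ∀ r : ℝ, max 0 (min 1 r) ∈ Set.Icc (0:ℝ) 1 :=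
      fun r => ⟨le_max_left _ _, max_le zero_le_one (min_le_left _ _)⟩
    set Ψ : (V → V → ℝ) → X := fun q => ⟨fun i => max 0 (min 1 (Φ q i)),
      fun i _ => hclamp_mem _⟩ with hΨ
    have hΨcont : Continuous Ψ := by
      refine Continuous.subtype_mk (continuous_pi fun i => ?_) _
      exact continuous_const.max (continuous_const.min (Stmt6.continuous_pathProb (c i)))
    have hΨmeas : Measurable Ψ := hΨcont.measurable
    have hΨval : ∀ q ∈ S, ∀ i, ((Ψ q : X) : (V ⊕ (V × V)) → ℝ) i = Φ q i := by
      intro q hq i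
      have hm := Stmt6.pathProb_mem_Icc hq ((Stmt6.isLoop_loopOf hconn o i).1)
      show max 0 (min 1 (Φ q i)) = Φ q i
      rw [min_eq_right hm.2, max_eq_right hm.1]
    have hΨinj : Set.InjOn Ψ S := by
      intro q hq q' hq' hEq
      refine Stmt6.injOn_valid hconn o hq hq' fun i => ?_
      have h0 : (Ψ q : (V ⊕ (V × V)) → ℝ) i = (Ψ q' : (V ⊕ (V × V)) → ℝ) i := by rw [hEq]
      rw [hΨval q hq i, hΨval q' hq' i] at h0
      exact h0
    -- integrability of continuous functions composed with Ψ
    have hInt : ∀ (Q : MeasureTheory.Measure (V → V → ℝ)), MeasureTheory.IsProbabilityMeasure Q →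
        ∀ g : C(X, ℝ), MeasureTheory.Integrable (fun q => g (Ψ q)) Q := by
      intro Q hQ g
      exact ((BoundedContinuousFunction.mkOfCompact g).compContinuous
        ⟨Ψ, hΨcont⟩).integrable Q
    -- coordinate functions
    set coordFn : (V ⊕ (V × V)) → C(X, ℝ) :=
      fun i => ⟨fun z => (z : (V ⊕ (V × V)) → ℝ) i,
        (continuous_apply i).comp continuous_subtype_val⟩ with hcoord
    set A : Subalgebra ℝ C(X, ℝ) := Algebra.adjoin ℝ (Set.range coordFn) with hA
    have hAsep : A.SeparatesPoints := by
      intro z w hzw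
      have hex : ∃ i, (z : (V ⊕ (V × V)) → ℝ) i ≠ (w : (V ⊕ (V × V)) → ℝ) i := by
        by_contra hcon
        push_neg at hcon
        exact hzw (Subtype.ext (funext hcon))
      obtain ⟨i, hi⟩ := hex
      exact ⟨coordFn i, ⟨coordFn i, Algebra.subset_adjoin ⟨i, rfl⟩, rfl⟩, hi⟩
    -- the predicate: g agrees with a loop probability on valid envs
    set Pd : C(X, ℝ) → Prop := fun g => ∃ γ : List V, IsLoop E o γ ∧
      ∀ q ∈ S, g (Ψ q) = pathProb q γ with hPdd
    have hPd1 : Pd 1 := ⟨[o], Stmt6.isLoop_trivial o, fun q _ => by simp⟩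
    have hPdmul : ∀ g₁ g₂, Pd g₁ → Pd g₂ → Pd (g₁ * g₂) := by
      rintro g₁ g₂ ⟨γ₁, h₁, hv₁⟩ ⟨γ₂, h₂, hv₂⟩
      refine ⟨Stmt6.glue γ₁ γ₂, Stmt6.isLoop_glue h₁ h₂, fun q hq => ?_⟩
      rw [ContinuousMap.mul_apply, hv₁ q hq, hv₂ q hq, Stmt6.pathProb_glue_loop h₁ h₂]
    have hPdcoord : ∀ i, Pd (coordFn i) :=
      fun i => ⟨c i, Stmt6.isLoop_loopOf hconn o i, fun q hq => hΨval q hq i⟩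
    have hPdclosure : ∀ g ∈ Submonoid.closure (Set.range coordFn), Pd g := by
      intro g hg
      induction hg using Submonoid.closure_induction with
      | mem x hx => obtain ⟨i, rfl⟩ := hx; exact hPdcoord i
      | one => exact hPd1
      | mul x y _ _ hx hy => exact hPdmul x y hx hy
    have hIntEq_of_Pd : ∀ g : C(X, ℝ), Pd g →
        ∫ q, g (Ψ q) ∂P = ∫ q, g (Ψ q) ∂P' := by
      rintro g ⟨γ, hγ, hval⟩
      have e1 : ∫ q, g (Ψ q) ∂P = ∫ q, pathProb q γ ∂P :=
        MeasureTheory.integral_congr_ae (hPsupp.mono fun q hq => hval q hq)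
      have e2 : ∫ q, g (Ψ q) ∂P' = ∫ q, pathProb q γ ∂P' :=
        MeasureTheory.integral_congr_ae (hP'supp.mono fun q hq => hval q hq)
      rw [e1, e2, h γ hγ.1]
    have hIntEqA : ∀ g ∈ A, ∫ q, g (Ψ q) ∂P = ∫ q, g (Ψ q) ∂P' := by
      intro g hg
      rw [hA, ← Subalgebra.mem_toSubmodule, Algebra.adjoin_eq_span] at hg
      induction hg using Submodule.span_induction with
      | mem x hx => exact hIntEq_of_Pd x (hPdclosure x hx)
      | zero => simp
      | add x y _ _ ihx ihy =>
          simp only [ContinuousMap.add_apply]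
          rw [MeasureTheory.integral_add (hInt P hP x) (hInt P hP y),
            MeasureTheory.integral_add (hInt P' hP' x) (hInt P' hP' y), ihx, ihy]
      | smul r x _ ihx =>
          simp only [ContinuousMap.smul_apply, smul_eq_mul]
          rw [MeasureTheory.integral_const_mul, MeasureTheory.integral_const_mul, ihx]
    have hIntEqAll : ∀ g : C(X, ℝ), ∫ q, g (Ψ q) ∂P = ∫ q, g (Ψ q) ∂P' := by
      intro g
      have key : ∀ ε : ℝ, 0 < ε →
          |∫ q, g (Ψ q) ∂P - ∫ q, g (Ψ q) ∂P'| ≤ 2 * ε := by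
        intro ε hε
        obtain ⟨⟨g', hg'A⟩, hg'⟩ :=
          ContinuousMap.exists_mem_subalgebra_near_continuousMap_of_separatesPoints
            A hAsep g ε hε
        have hbound : ∀ (Q : MeasureTheory.Measure (V → V → ℝ)),
            MeasureTheory.IsProbabilityMeasure Q →
            |∫ q, g (Ψ q) ∂Q - ∫ q, g' (Ψ q) ∂Q| ≤ ε := by
          intro Q hQ
          rw [← MeasureTheory.integral_sub (hInt Q hQ g) (hInt Q hQ g')]
          have hb : ∀ q, ‖g (Ψ q) - g' (Ψ q)‖ ≤ ε := by
            intro q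
            have h1 : ‖(g - g') (Ψ q)‖ ≤ ‖g - g'‖ :=
              ContinuousMap.norm_coe_le_norm (g - g') (Ψ q)
            have h2 : ‖g - g'‖ < ε := by rwa [norm_sub_rev] at hg'
            calc ‖g (Ψ q) - g' (Ψ q)‖ = ‖(g - g') (Ψ q)‖ := by
                  rw [ContinuousMap.sub_apply]
              _ ≤ ‖g - g'‖ := h1
              _ ≤ ε := h2.le
          calc ‖∫ q, (g (Ψ q) - g' (Ψ q)) ∂Q‖
              ≤ ε * (Q Set.univ).toReal :=
                MeasureTheory.norm_integral_le_of_norm_le_const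
                  (Filter.Eventually.of_forall hb)
            _ = ε := by rw [hQ.measure_univ]; simp
        have hmid := hIntEqA g' hg'A
        have h1 := hbound P hP
        have h2 := hbound P' hP'
        rw [abs_le] at h1 h2 ⊢
        constructor <;> [linarith [h1.1, h2.2]; linarith [h1.2, h2.1]]
      by_contra hne
      have habs : 0 < |∫ q, g (Ψ q) ∂P - ∫ q, g (Ψ q) ∂P'| :=
        abs_pos.2 (sub_ne_zero.2 hne)
      have := key (|∫ q, g (Ψ q) ∂P - ∫ q, g (Ψ q) ∂P'| / 4) (by linarith)
      linarith
    -- equality of pushforwards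
    have hmap : P.map Ψ = P'.map Ψ := by
      haveI h1 : MeasureTheory.IsProbabilityMeasure (P.map Ψ) :=
        MeasureTheory.Measure.isProbabilityMeasure_map hΨmeas.aemeasurable
      haveI h2 : MeasureTheory.IsProbabilityMeasure (P'.map Ψ) :=
        MeasureTheory.Measure.isProbabilityMeasure_map hΨmeas.aemeasurable
      refine MeasureTheory.ext_of_forall_lintegral_eq_of_IsFiniteMeasure ?_
      intro f
      have hfin1 : ∫⁻ x, f x ∂(P.map Ψ) ≠ ⊤ :=
        (BoundedContinuousFunction.lintegral_lt_top_of_nnreal _ f).ne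
      have hfin2 : ∫⁻ x, f x ∂(P'.map Ψ) ≠ ⊤ :=
        (BoundedContinuousFunction.lintegral_lt_top_of_nnreal _ f).ne
      have hco : Continuous fun x : X => (f x : ℝ) :=
        NNReal.continuous_coe.comp f.continuous
      have hR : ∫ x, (f x : ℝ) ∂(P.map Ψ) = ∫ x, (f x : ℝ) ∂(P'.map Ψ) := by
        rw [MeasureTheory.integral_map hΨmeas.aemeasurable hco.aestronglyMeasurable,
          MeasureTheory.integral_map hΨmeas.aemeasurable hco.aestronglyMeasurable]
        exact hIntEqAll ⟨fun x => (f x : ℝ), hco⟩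
      have t1 := BoundedContinuousFunction.toReal_lintegral_coe_eq_integral f (P.map Ψ)
      have t2 := BoundedContinuousFunction.toReal_lintegral_coe_eq_integral f (P'.map Ψ)
      refine (ENNReal.toReal_eq_toReal_iff' hfin1 hfin2).1 ?_
      rw [t1, t2]; exact hR
    -- recover the measures
    ext B hB
    have hBS : MeasurableSet (B ∩ S) := hB.inter hSm
    have hI : MeasurableSet (Ψ '' (B ∩ S)) :=
      hBS.image_of_continuousOn_injOn hΨcont.continuousOn
        (hΨinj.mono Set.inter_subset_right)
    have hpre : ∀ (Q : MeasureTheory.Measure (V → V → ℝ)), (∀ᵐ q ∂Q, ValidEnv E q) →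
        Q B = Q (Ψ ⁻¹' (Ψ '' (B ∩ S))) := by
      intro Q hQs
      refine MeasureTheory.measure_congr ?_
      rw [Filter.eventuallyEq_set]
      refine hQs.mono fun q hq => ?_
      constructor
      · intro hqB
        exact ⟨q, ⟨hqB, hq⟩, rfl⟩
      · rintro ⟨q', ⟨hq'B, hq'S⟩, hEq⟩
        have : q' = q := hΨinj hq'S hq hEq
        rwa [← this]
    have e1 : P B = (P.map Ψ) (Ψ '' (B ∩ S)) := by
      rw [MeasureTheory.Measure.map_apply hΨmeas hI]; exact hpre P hPsupp
    have e2 : P' B = (P'.map Ψ) (Ψ '' (B ∩ S)) := by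
      rw [MeasureTheory.Measure.map_apply hΨmeas hI]; exact hpre P' hP'supp
    rw [e1, e2, hmap]
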